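/- arXiv:2311.13741 — 2 statements merged into one kernel-verified Lean document; each statement's English description precedes it below -/
import Mathlib

section
/- If α and β are permutations of a finite set of cardinality m such that the subgroup generated by α and β acts transitively, then |α| + |β| + |(αβ)⁻¹| ≤ m + 2. -/
set_option linter.unusedSectionVars false
set_option linter.unusedVariables false
set_option maxHeartbeats 1000000

/-- The number of cycles of a permutation `σ` on a finite set, fixed points
included as trivial cycles (= number of orbits of the group generated by `σ`). -/
def cycleCount {X : Type*} [Fintype X] [DecidableEq X] (σ : Equiv.Perm X) : ℕ :=
  (Fintype.card X - σ.cycleType.sum) + σ.cycleType.card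

namespace CCAux

section Counting

variable {α : Type*} [Finite α]

lemma card_quot_le_of_le {s t : Setoid α} (h : ∀ a b, s.r a b → t.r a b) :
    Nat.card (Quotient t) ≤ Nat.card (Quotient s) := by
  haveI : Finite (Quotient s) := Quotient.finite _
  refine Nat.card_le_card_of_surjective (Quotient.map' id h) ?_
  intro q
  induction q using Quotient.inductionOn' with
  | h a => exact ⟨Quotient.mk'' a, rfl⟩

lemma card_quot_le_card {s : Setoid α} : Nat.card (Quotient s) ≤ Nat.card α :=
  Nat.card_le_card_of_surjective (Quotient.mk s) Quotient.mk_surjective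

/-- If `t` strictly coarsens `s` (witnessed by `x, y`), the quotient by `t` has
strictly fewer classes. -/
lemma card_quot_succ_le_of_strict {s t : Setoid α} (h : ∀ a b, s.r a b → t.r a b)
    {x y : α} (hxy : t.r x y) (hn : ¬ s.r x y) :
    Nat.card (Quotient t) + 1 ≤ Nat.card (Quotient s) := by
  classical
  haveI : Finite (Quotient s) := Quotient.finite _
  haveI : Finite (Quotient t) := Quotient.finite _
  set φ : Quotient s → Quotient t := Quotient.map' id h with hφdef
  have hφmk : ∀ a : α, φ (Quotient.mk s a) = Quotient.mk t a := fun a => rfl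
  have hsurj : Function.Surjective φ := by
    intro q
    induction q using Quotient.inductionOn' with
    | h a => exact ⟨Quotient.mk s a, rfl⟩
  set g := Function.surjInv hsurj with hgdef
  have key : ∀ c, φ (g c) = c := Function.rightInverse_surjInv hsurj
  have hginj : Function.Injective g := Function.injective_surjInv hsurj
  set mx : Quotient s := Quotient.mk s x with hmx
  set my : Quotient s := Quotient.mk s y with hmy
  have hmxy : mx ≠ my := fun e => hn (Quotient.exact e)
  have hφxy : φ mx = φ my := by
    rw [hφmk, hφmk]
    exact Quotient.sound hxy
  set F : Option (Quotient t) → Quotient s := fun o => o.elim (if g (φ mx) = mx then my else mx) g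
    with hF
  have hinj : Function.Injective F := by
    intro o1 o2 he
    match o1, o2 with
    | none, none => rfl
    | some c, some d =>
      simp only [F, Option.elim] at he
      exact congrArg some (hginj he)
    | none, some c =>
      exfalso
      simp only [F, Option.elim] at he
      split_ifs at he with hcase
      · have hc : c = φ mx := by rw [← key c, ← he, ← hφxy]
        rw [hc] at he
        exact hmxy (hcase.symm.trans he.symm)
      · have hc : c = φ mx := by rw [← key c, ← he]
        rw [hc] at he
        exact hcase he.symm
    | some c, none =>
      exfalso
      simp only [F, Option.elim] at he
      split_ifs at he with hcase
      · have hc : c = φ mx := by rw [← key c, he, ← hφxy]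
        rw [hc] at he
        exact hmxy (hcase.symm.trans he)
      · have hc : c = φ mx := by rw [← key c, he]
        rw [hc] at he
        exact hcase he
  calc Nat.card (Quotient t) + 1 = Nat.card (Option (Quotient t)) := (Finite.card_option).symm
    _ ≤ Nat.card (Quotient s) := Nat.card_le_card_of_injective F hinj

/-- Merging along a single pair `(x, y)` loses at most one class. -/
lemma card_quot_le_succ {s t : Setoid α} {x y : α}
    (hst : ∀ a b, s.r a b → t.r a b)
    (hchar : ∀ a b, t.r a b → s.r a b ∨ (s.r a x ∧ s.r y b) ∨ (s.r a y ∧ s.r x b)) :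
    Nat.card (Quotient s) ≤ Nat.card (Quotient t) + 1 := by
  classical
  haveI : Finite (Quotient t) := Quotient.finite _
  set f : Quotient s → Option (Quotient t) :=
    Quotient.lift (fun a => if s.r x a ∧ ¬ s.r x y then none else some (Quotient.mk t a))
      (by
        intro a b hab
        have hiff : s.r x a ↔ s.r x b := ⟨fun h => s.iseqv.trans h hab,
          fun h => s.iseqv.trans h (s.iseqv.symm hab)⟩
        by_cases hc : s.r x a ∧ ¬ s.r x y
        · rw [if_pos hc, if_pos ⟨hiff.mp hc.1, hc.2⟩]
        · rw [if_neg hc, if_neg (fun hc' => hc ⟨hiff.mpr hc'.1, hc'.2⟩)]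
          exact congrArg some (Quotient.sound (hst a b hab)))
    with hf
  have hinj : Function.Injective f := by
    intro q1 q2 he
    induction q1 using Quotient.inductionOn with
    | h a =>
    induction q2 using Quotient.inductionOn with
    | h b =>
    by_cases h1 : s.r x a ∧ ¬ s.r x y <;> by_cases h2 : s.r x b ∧ ¬ s.r x y
    · exact Quotient.sound (s.iseqv.trans (s.iseqv.symm h1.1) h2.1)
    · simp only [f, Quotient.lift_mk, if_pos h1, if_neg h2, reduceCtorEq] at he
    · simp only [f, Quotient.lift_mk, if_neg h1, if_pos h2, reduceCtorEq] at he
    · simp only [f, Quotient.lift_mk, if_neg h1, if_neg h2, Option.some.injEq] at he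
      have htab : t.r a b := Quotient.exact he
      rcases hchar a b htab with hab | ⟨hax, hyb⟩ | ⟨hay, hxb⟩
      · exact Quotient.sound hab
      · by_cases hxy : s.r x y
        · exact Quotient.sound (s.iseqv.trans hax (s.iseqv.trans hxy hyb))
        · exact absurd ⟨s.iseqv.symm hax, hxy⟩ h1
      · by_cases hxy : s.r x y
        · exact Quotient.sound
            (s.iseqv.trans hay (s.iseqv.trans (s.iseqv.symm hxy) hxb))
        · exact absurd ⟨hxb, hxy⟩ h2
  haveI := Fintype.ofFinite (Quotient t)
  calc Nat.card (Quotient s) ≤ Nat.card (Option (Quotient t)) :=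
        Nat.card_le_card_of_injective f hinj
    _ = Nat.card (Quotient t) + 1 := Finite.card_option

/-- If `x ~ y` already, merging along `(x, y)` loses nothing. -/
lemma card_quot_le_of_char {s t : Setoid α} {x y : α}
    (hst : ∀ a b, s.r a b → t.r a b)
    (hchar : ∀ a b, t.r a b → s.r a b ∨ (s.r a x ∧ s.r y b) ∨ (s.r a y ∧ s.r x b))
    (hxy : s.r x y) :
    Nat.card (Quotient s) ≤ Nat.card (Quotient t) := by
  have hts : ∀ a b, t.r a b → s.r a b := by
    intro a b htab
    rcases hchar a b htab with hab | ⟨hax, hyb⟩ | ⟨hay, hxb⟩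
    · exact hab
    · exact s.iseqv.trans hax (s.iseqv.trans hxy hyb)
    · exact s.iseqv.trans hay (s.iseqv.trans (s.iseqv.symm hxy) hxb)
  exact card_quot_le_of_le hts

end Counting

open Equiv Equiv.Perm Subgroup

variable {X : Type*} [Fintype X] [DecidableEq X]

/-- The orbit relation of a subgroup of permutations. -/
def oRel (G : Subgroup (Equiv.Perm X)) (a b : X) : Prop := ∃ g ∈ G, g a = b

lemma oRel.refl (G : Subgroup (Equiv.Perm X)) (a : X) : oRel G a a := ⟨1, one_mem G, rfl⟩

lemma oRel.symm {G : Subgroup (Equiv.Perm X)} {a b : X} (h : oRel G a b) : oRel G b a := by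
  obtain ⟨g, hg, rfl⟩ := h
  exact ⟨g⁻¹, inv_mem hg, g.symm_apply_apply a⟩

lemma oRel.trans {G : Subgroup (Equiv.Perm X)} {a b c : X} (h1 : oRel G a b)
    (h2 : oRel G b c) : oRel G a c := by
  obtain ⟨g, hg, rfl⟩ := h1
  obtain ⟨k, hk, rfl⟩ := h2
  exact ⟨k * g, mul_mem hk hg, rfl⟩

/-- The orbit setoid. -/
def orbSetoid (G : Subgroup (Equiv.Perm X)) : Setoid X :=
  ⟨oRel G, ⟨oRel.refl G, oRel.symm, oRel.trans⟩⟩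

/-- Number of orbits. -/
noncomputable def norb (G : Subgroup (Equiv.Perm X)) : ℕ :=
  Nat.card (Quotient (orbSetoid G))

lemma oRel_mono {G H : Subgroup (Equiv.Perm X)} (h : G ≤ H) {a b : X}
    (hr : oRel G a b) : oRel H a b := by
  obtain ⟨g, hg, e⟩ := hr
  exact ⟨g, h hg, e⟩

lemma norb_antitone {G H : Subgroup (Equiv.Perm X)} (h : G ≤ H) : norb H ≤ norb G :=
  card_quot_le_of_le (s := orbSetoid G) (t := orbSetoid H) (fun a b hr => oRel_mono h hr)

lemma norb_le_card (G : Subgroup (Equiv.Perm X)) : norb G ≤ Fintype.card X := by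
  rw [← Nat.card_eq_fintype_card]
  exact card_quot_le_card

/-- Characterization of the orbit relation after adding a swap to the group. -/
lemma rel_sup_swap_char {G : Subgroup (Equiv.Perm X)} {x y : X} (a b : X)
    (h : oRel (G ⊔ Subgroup.closure {Equiv.swap x y}) a b) :
    oRel G a b ∨ (oRel G a x ∧ oRel G y b) ∨ (oRel G a y ∧ oRel G x b) := by
  set R : X → X → Prop := fun a b =>
    oRel G a b ∨ (oRel G a x ∧ oRel G y b) ∨ (oRel G a y ∧ oRel G x b) with hR
  have Rrefl : ∀ a, R a a := fun a => Or.inl (oRel.refl G a)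
  have Rsymm : ∀ {a b}, R a b → R b a := by
    rintro a b (hab | ⟨h1, h2⟩ | ⟨h1, h2⟩)
    · exact Or.inl hab.symm
    · exact Or.inr (Or.inr ⟨h2.symm, h1.symm⟩)
    · exact Or.inr (Or.inl ⟨h2.symm, h1.symm⟩)
  have Rtrans : ∀ {a b c}, R a b → R b c → R a c := by
    rintro a b c (hab | ⟨h1, h2⟩ | ⟨h1, h2⟩) (hbc | ⟨h3, h4⟩ | ⟨h3, h4⟩)
    · exact Or.inl (hab.trans hbc)
    · exact Or.inr (Or.inl ⟨hab.trans h3, h4⟩)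
    · exact Or.inr (Or.inr ⟨hab.trans h3, h4⟩)
    · exact Or.inr (Or.inl ⟨h1, h2.trans hbc⟩)
    · exact Or.inl (h1.trans ((h2.trans h3).symm.trans h4))
    · exact Or.inl (h1.trans h4)
    · exact Or.inr (Or.inr ⟨h1, h2.trans hbc⟩)
    · exact Or.inl (h1.trans h4)
    · exact Or.inl (h1.trans ((h2.trans h3).symm.trans h4))
  obtain ⟨g, hg, rfl⟩ := h
  rw [← Subgroup.closure_eq G, ← Subgroup.closure_union] at hg
  have main : ∀ c, R c (g c) := by
    refine Subgroup.closure_induction (p := fun g _ => ∀ c, R c (g c)) ?_ ?_ ?_ ?_ hg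
    · rintro g (hgG | hgτ) c
      · exact Or.inl ⟨g, hgG, rfl⟩
      · rw [Set.mem_singleton_iff] at hgτ
        subst hgτ
        by_cases hcx : c = x
        · rw [hcx, Equiv.swap_apply_left]
          exact Or.inr (Or.inl ⟨oRel.refl G x, oRel.refl G y⟩)
        · by_cases hcy : c = y
          · rw [hcy, Equiv.swap_apply_right]
            exact Or.inr (Or.inr ⟨oRel.refl G y, oRel.refl G x⟩)
          · rw [Equiv.swap_apply_of_ne_of_ne hcx hcy]
            exact Rrefl c
    · intro c
      simpa using Rrefl c
    · intro g k _ _ pg pk c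
      have : (g * k) c = g (k c) := rfl
      rw [this]
      exact Rtrans (pk c) (pg (k c))
    · intro g _ pg c
      have := pg (g⁻¹ c)
      rw [show g (g⁻¹ c) = c from g.apply_symm_apply c] at this
      exact Rsymm this
  exact main a

/-- Collapse: if `x ~ y` in `G` then adding the swap does not change the relation. -/
lemma oRel_reduce {G : Subgroup (Equiv.Perm X)} {x y : X} (hxy : oRel G x y) {a b : X}
    (h : oRel (G ⊔ Subgroup.closure {Equiv.swap x y}) a b) : oRel G a b := by
  rcases rel_sup_swap_char a b h with hab | ⟨hax, hyb⟩ | ⟨hay, hxb⟩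
  · exact hab
  · exact hax.trans (hxy.trans hyb)
  · exact hay.trans (hxy.symm.trans hxb)

lemma norb_le_sup_swap_succ (G : Subgroup (Equiv.Perm X)) (x y : X) :
    norb G ≤ norb (G ⊔ Subgroup.closure {Equiv.swap x y}) + 1 :=
  card_quot_le_succ (s := orbSetoid G) (t := orbSetoid (G ⊔ Subgroup.closure {Equiv.swap x y}))
    (fun a b hr => oRel_mono le_sup_left hr) (fun a b h => rel_sup_swap_char a b h)

lemma norb_le_sup_swap (G : Subgroup (Equiv.Perm X)) {x y : X} (hxy : oRel G x y) :
    norb G ≤ norb (G ⊔ Subgroup.closure {Equiv.swap x y}) :=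
  card_quot_le_of_char (s := orbSetoid G) (t := orbSetoid (G ⊔ Subgroup.closure {Equiv.swap x y}))
    (fun a b hr => oRel_mono le_sup_left hr) (fun a b h => rel_sup_swap_char a b h) hxy

lemma oRel_closure_singleton_iff (σ : Equiv.Perm X) (a b : X) :
    oRel (Subgroup.closure {σ}) a b ↔ σ.SameCycle a b := by
  constructor
  · rintro ⟨g, hg, rfl⟩
    rw [Subgroup.mem_closure_singleton] at hg
    obtain ⟨n, rfl⟩ := hg
    exact ⟨n, rfl⟩
  · rintro ⟨n, hn⟩
    exact ⟨σ ^ n, Subgroup.mem_closure_singleton.mpr ⟨n, rfl⟩, hn⟩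

/-- Not in the same cycle as a distinct fixed point. -/
lemma not_sameCycle_of_fixed {σ : Equiv.Perm X} {x y : X} (hxy : x ≠ y) (hy : σ y = y) :
    ¬ σ.SameCycle x y :=
  fun h => hxy ((h.symm.eq_of_left hy).symm)

/-- The walk lemma: if `x` and `y` are in different cycles of `σ'`, then they are in
the same cycle of `σ' * swap x y`. -/
lemma sameCycle_mul_swap {σ' : Equiv.Perm X} {x y : X}
    (h : ¬ σ'.SameCycle x y) : (σ' * Equiv.swap x y).SameCycle x y := by
  set σ : Equiv.Perm X := σ' * Equiv.swap x y with hσ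
  have hσx : σ x = σ' y := by rw [hσ]; simp [Equiv.swap_apply_left]
  have hσz : ∀ z, z ≠ x → z ≠ y → σ z = σ' z := by
    intro z h1 h2
    rw [hσ]
    simp [Equiv.swap_apply_of_ne_of_ne h1 h2]
  have hex : ∃ k, 0 < k ∧ (σ' ^ k) y = y := by
    refine ⟨orderOf σ', orderOf_pos σ', ?_⟩
    rw [pow_orderOf_eq_one]; rfl
  set k := Nat.find hex with hk
  obtain ⟨hkpos, hky⟩ := Nat.find_spec hex
  have claim : ∀ i, 1 ≤ i → i ≤ k → (σ ^ i) x = (σ' ^ i) y := by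
    intro i
    induction i with
    | zero => omega
    | succ n ihn =>
      intro _ hle
      by_cases hn : n = 0
      · subst hn
        simpa using hσx
      · have h1n : 1 ≤ n := Nat.one_le_iff_ne_zero.mpr hn
        have hnk : n < k := by omega
        have hprev : (σ ^ n) x = (σ' ^ n) y := ihn h1n (le_of_lt hnk)
        have hne_y : (σ' ^ n) y ≠ y := by
          intro hcon
          exact (Nat.find_min hex hnk) ⟨by omega, hcon⟩
        have hne_x : (σ' ^ n) y ≠ x := by
          intro hcon
          exact h (Equiv.Perm.SameCycle.symm ⟨(n : ℤ), by rw [zpow_natCast]; exact hcon⟩)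
        rw [pow_succ', Equiv.Perm.mul_apply, hprev, hσz _ hne_x hne_y, ← Equiv.Perm.mul_apply,
          ← pow_succ']
  exact ⟨(k : ℤ), by rw [zpow_natCast, claim k hkpos (le_refl k), hky]⟩

/-- The bridge: `cycleCount` equals the number of orbits of the generated cyclic group. -/
lemma cycleCount_eq_norb (σ : Equiv.Perm X) :
    cycleCount σ = norb (Subgroup.closure {σ}) := by
  classical
  set s : Setoid X := orbSetoid (Subgroup.closure {σ}) with hs
  have hrel : ∀ a b : X, s.r a b ↔ σ.SameCycle a b := fun a b =>
    oRel_closure_singleton_iff σ a b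
  set T := ({a : X // σ a = a} ⊕ {c : Equiv.Perm X // c ∈ σ.cycleFactorsFinset}) with hT
  set f : Quotient s → T :=
    Quotient.lift (fun a => if h : σ a = a then Sum.inl ⟨a, h⟩ else
        Sum.inr ⟨σ.cycleOf a, cycleOf_mem_cycleFactorsFinset_iff.mpr (mem_support.mpr h)⟩)
      (by
        intro a b hab
        have hsc : σ.SameCycle a b := (hrel a b).mp hab
        by_cases ha : σ a = a
        · have hb : σ b = b := (hsc.apply_eq_self_iff).mp ha
          rw [dif_pos ha, dif_pos hb]
          have : a = b := hsc.eq_of_left ha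
          subst this; rfl
        · have hb : ¬ σ b = b := fun hb => ha ((hsc.apply_eq_self_iff).mpr hb)
          rw [dif_neg ha, dif_neg hb]
          exact congrArg Sum.inr (Subtype.ext (hsc.cycleOf_eq))) with hf
  have hfmk : ∀ a : X, f (Quotient.mk s a) = if h : σ a = a then Sum.inl ⟨a, h⟩ else
      Sum.inr ⟨σ.cycleOf a, cycleOf_mem_cycleFactorsFinset_iff.mpr (mem_support.mpr h)⟩ :=
    fun a => rfl
  have hinj : Function.Injective f := by
    intro q1 q2 he
    induction q1 using Quotient.inductionOn with
    | h a =>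
    induction q2 using Quotient.inductionOn with
    | h b =>
    rw [hfmk, hfmk] at he
    by_cases ha : σ a = a <;> by_cases hb : σ b = b
    · rw [dif_pos ha, dif_pos hb] at he
      have : a = b := congrArg
        (fun t : {a : X // σ a = a} ⊕ _ => Sum.elim Subtype.val (fun _ => a) t) he
      exact Quotient.sound ((hrel a b).mpr (this ▸ Equiv.Perm.SameCycle.refl σ a))
    · rw [dif_pos ha, dif_neg hb] at he
      exact absurd he (by simp)
    · rw [dif_neg ha, dif_pos hb] at he
      exact absurd he (by simp)
    · rw [dif_neg ha, dif_neg hb] at he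
      have hco : σ.cycleOf a = σ.cycleOf b := by
        have := congrArg (fun t : _ ⊕ {c : Equiv.Perm X // c ∈ σ.cycleFactorsFinset} =>
          Sum.elim (fun _ => σ.cycleOf a) Subtype.val t) he
        simpa using this
      have hbsupp : b ∈ (σ.cycleOf a).support := by
        rw [hco, mem_support_cycleOf_iff]
        exact ⟨Equiv.Perm.SameCycle.refl σ b, mem_support.mpr hb⟩
      rw [mem_support_cycleOf_iff] at hbsupp
      exact Quotient.sound ((hrel a b).mpr hbsupp.1)
  have hsurj : Function.Surjective f := by
    rintro (⟨a, ha⟩ | ⟨c, hc⟩)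
    · exact ⟨Quotient.mk s a, by rw [hfmk, dif_pos ha]⟩
    · have hcyc : c.IsCycle := (mem_cycleFactorsFinset_iff.mp hc).1
      obtain ⟨a, ha⟩ : ∃ a, a ∈ c.support := by
        by_contra hcon
        push_neg at hcon
        exact hcyc.ne_one (support_eq_empty_iff.mp (Finset.eq_empty_of_forall_notMem hcon))
      have haσ : a ∈ σ.support := mem_cycleFactorsFinset_support_le hc ha
      have hmoved : ¬ σ a = a := mem_support.mp haσ
      refine ⟨Quotient.mk s a, ?_⟩
      rw [hfmk, dif_neg hmoved]
      exact congrArg Sum.inr (Subtype.ext (cycle_is_cycleOf ha hc).symm)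
  have hcard : Nat.card (Quotient s) = Nat.card T :=
    Nat.card_eq_of_bijective f ⟨hinj, hsurj⟩
  have hcardT : Nat.card T =
      (Fintype.card X - σ.support.card) + σ.cycleFactorsFinset.card := by
    rw [hT, Nat.card_sum, Nat.card_eq_fintype_card, Nat.card_eq_fintype_card]
    congr 1
    · rw [Fintype.card_subtype]
      have h2 : σ.support = Finset.univ.filter (fun a => ¬ σ a = a) := by
        ext a
        simp [Equiv.Perm.mem_support]
      rw [h2]
      have h1 := Finset.card_filter_add_card_filter_not
        (s := (Finset.univ : Finset X)) (p := fun a => σ a = a)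
      simp only [Finset.card_univ] at h1
      omega
    · rw [Fintype.card_coe]
  have hcc : cycleCount σ = (Fintype.card X - σ.support.card) + σ.cycleFactorsFinset.card := by
    rw [cycleCount, Equiv.Perm.sum_cycleType]
    congr 1
    rw [Equiv.Perm.cycleType_def, Multiset.card_map]
    rfl
  rw [hcc, norb, ← hs, hcard, hcardT]

lemma norb_one : norb (Subgroup.closure {(1 : Equiv.Perm X)}) = Fintype.card X := by
  rw [Subgroup.closure_singleton_one]
  have hbij : Function.Bijective (Quotient.mk (orbSetoid (⊥ : Subgroup (Equiv.Perm X)))) := by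
    constructor
    · intro a b he
      obtain ⟨g, hg, e⟩ := Quotient.exact he
      rw [Subgroup.mem_bot] at hg
      subst hg
      simpa using e
    · exact Quotient.mk_surjective
  rw [norb, ← Nat.card_eq_fintype_card]
  exact (Nat.card_eq_of_bijective _ hbij).symm

/-- The key inequality, proved by induction. -/
lemma key : ∀ (k : ℕ) (α β : Equiv.Perm X),
    Fintype.card X - norb (Subgroup.closure {β}) ≤ k →
    norb (Subgroup.closure {α}) + norb (Subgroup.closure {β}) +
      norb (Subgroup.closure {α * β})
      ≤ Fintype.card X + 2 * norb (Subgroup.closure {α, β}) := by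
  intro k
  induction k with
  | zero =>
    intro α β hk
    by_cases hβ : β = 1
    · subst hβ
      have h1 : Subgroup.closure {α, (1 : Equiv.Perm X)} = Subgroup.closure {α} := by
        apply le_antisymm
        · rw [Subgroup.closure_le]
          rintro g (rfl | hg)
          · exact Subgroup.subset_closure rfl
          · rw [Set.mem_singleton_iff] at hg
            subst hg
            exact one_mem _
        · exact Subgroup.closure_mono (by simp)
      rw [h1, mul_one, norb_one]
      omega
    · exfalso
      -- β ≠ 1 : it has a non-fixed point, so norb β' = norb β + 1 ≤ card X, contradiction
      obtain ⟨x, hx⟩ : ∃ x, β x ≠ x := by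
        by_contra hcon
        push_neg at hcon
        exact hβ (Equiv.ext hcon)
      have hxy : x ≠ β x := fun e => hx e.symm
      have hβ'fix : (β * Equiv.swap x (β x)) (β x) = β x := by
        simp [Equiv.swap_apply_right]
      have hrelβ : oRel (Subgroup.closure {β}) x (β x) :=
        (oRel_closure_singleton_iff β x (β x)).mpr ⟨1, by simp⟩
      have hnrel : ¬ oRel (Subgroup.closure {β * Equiv.swap x (β x)}) x (β x) := by
        rw [oRel_closure_singleton_iff]
        exact not_sameCycle_of_fixed hxy hβ'fix
      have hle1 : Subgroup.closure {β * Equiv.swap x (β x)} ≤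
          Subgroup.closure {β} ⊔ Subgroup.closure {Equiv.swap x (β x)} := by
        rw [Subgroup.closure_le]
        rintro g rfl
        exact mul_mem (Subgroup.mem_sup_left (Subgroup.subset_closure rfl))
          (Subgroup.mem_sup_right (Subgroup.subset_closure rfl))
      have hst : ∀ a b, oRel (Subgroup.closure {β * Equiv.swap x (β x)}) a b →
          oRel (Subgroup.closure {β}) a b := fun a b hr =>
        oRel_reduce hrelβ (oRel_mono hle1 hr)
      have hgt := card_quot_succ_le_of_strict
        (s := orbSetoid (Subgroup.closure {β * Equiv.swap x (β x)}))
        (t := orbSetoid (Subgroup.closure {β})) hst hrelβ hnrel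
      have hub := norb_le_card (Subgroup.closure {β * Equiv.swap x (β x)})
      have := norb_le_card (Subgroup.closure {β})
      change norb (Subgroup.closure {β}) + 1 ≤
        norb (Subgroup.closure {β * Equiv.swap x (β x)}) at hgt
      omega
  | succ k ih =>
    intro α β hk
    by_cases hβ : β = 1
    · subst hβ
      have h1 : Subgroup.closure {α, (1 : Equiv.Perm X)} = Subgroup.closure {α} := by
        apply le_antisymm
        · rw [Subgroup.closure_le]
          rintro g (rfl | hg)
          · exact Subgroup.subset_closure rfl
          · rw [Set.mem_singleton_iff] at hg
            subst hg
            exact one_mem _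
        · exact Subgroup.closure_mono (by simp)
      rw [h1, mul_one, norb_one]
      omega
    · obtain ⟨x, hx⟩ : ∃ x, β x ≠ x := by
        by_contra hcon
        push_neg at hcon
        exact hβ (Equiv.ext hcon)
      set y : X := β x with hy
      set τ : Equiv.Perm X := Equiv.swap x y with hτ
      set β' : Equiv.Perm X := β * τ with hβ'
      have hxy : x ≠ y := fun e => hx e.symm
      have hττ : τ * τ = 1 := by rw [hτ]; exact Equiv.swap_mul_self x y
      have hβτ : β' * τ = β := by rw [hβ', mul_assoc, hττ, mul_one]
      -- membership facts
      have hmemβ' : Subgroup.closure {β'} ≤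
          Subgroup.closure {β} ⊔ Subgroup.closure {τ} := by
        rw [Subgroup.closure_le]
        rintro g rfl
        exact mul_mem (Subgroup.mem_sup_left (Subgroup.subset_closure rfl))
          (Subgroup.mem_sup_right (Subgroup.subset_closure rfl))
      have hmemβ : Subgroup.closure {β} ≤
          Subgroup.closure {β'} ⊔ Subgroup.closure {τ} := by
        rw [Subgroup.closure_le]
        rintro g rfl
        rw [← hβτ]
        exact mul_mem (Subgroup.mem_sup_left (Subgroup.subset_closure rfl))
          (Subgroup.mem_sup_right (Subgroup.subset_closure rfl))
      have hrelβ : oRel (Subgroup.closure {β}) x y :=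
        (oRel_closure_singleton_iff β x y).mpr ⟨1, by simp [hy]⟩
      have hβ'fix : β' y = y := by
        rw [hβ', hτ]
        simp [Equiv.swap_apply_right, hy]
      have hnrelβ' : ¬ oRel (Subgroup.closure {β'}) x y := by
        rw [oRel_closure_singleton_iff]
        exact not_sameCycle_of_fixed hxy hβ'fix
      -- norb β' = norb β + 1
      have hstβ : ∀ a b, oRel (Subgroup.closure {β'}) a b →
          oRel (Subgroup.closure {β}) a b := fun a b hr =>
        oRel_reduce hrelβ (oRel_mono hmemβ' hr)
      have hβup : norb (Subgroup.closure {β}) + 1 ≤ norb (Subgroup.closure {β'}) :=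
        card_quot_succ_le_of_strict (s := orbSetoid (Subgroup.closure {β'}))
          (t := orbSetoid (Subgroup.closure {β})) hstβ hrelβ hnrelβ'
      have hβdown : norb (Subgroup.closure {β'}) ≤ norb (Subgroup.closure {β}) + 1 := by
        calc norb (Subgroup.closure {β'})
            ≤ norb (Subgroup.closure {β'} ⊔ Subgroup.closure {τ}) + 1 :=
              norb_le_sup_swap_succ _ x y
          _ ≤ norb (Subgroup.closure {β}) + 1 :=
              Nat.add_le_add_right (norb_antitone hmemβ) 1
      have hβeq : norb (Subgroup.closure {β'}) = norb (Subgroup.closure {β}) + 1 :=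
        le_antisymm hβdown hβup
      have hβ'ub : norb (Subgroup.closure {β'}) ≤ Fintype.card X := norb_le_card _
      -- the inductive hypothesis applies to (α, β')
      have hmeasure : Fintype.card X - norb (Subgroup.closure {β'}) ≤ k := by omega
      have hIH := ih α β' hmeasure
      -- relations between products
      have hprod : α * β' = (α * β) * τ := by rw [hβ', mul_assoc]
      have hprod2 : (α * β') * τ = α * β := by rw [hprod, mul_assoc, hττ, mul_one]
      have hmemαβ' : Subgroup.closure {α * β'} ≤
          Subgroup.closure {α * β} ⊔ Subgroup.closure {τ} := by
        rw [Subgroup.closure_le]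
        rintro g rfl
        rw [hprod]
        exact mul_mem (Subgroup.mem_sup_left (Subgroup.subset_closure rfl))
          (Subgroup.mem_sup_right (Subgroup.subset_closure rfl))
      have hmemαβ : Subgroup.closure {α * β} ≤
          Subgroup.closure {α * β'} ⊔ Subgroup.closure {τ} := by
        rw [Subgroup.closure_le]
        rintro g rfl
        rw [← hprod2]
        exact mul_mem (Subgroup.mem_sup_left (Subgroup.subset_closure rfl))
          (Subgroup.mem_sup_right (Subgroup.subset_closure rfl))
      -- sup-of-two-generator groups
      have hmem2β : Subgroup.closure {α, β} ≤
          Subgroup.closure {α, β'} ⊔ Subgroup.closure {τ} := by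
        rw [Subgroup.closure_le]
        rintro g (rfl | hg)
        · exact Subgroup.mem_sup_left (Subgroup.subset_closure (by simp))
        · rw [Set.mem_singleton_iff] at hg
          subst hg
          rw [← hβτ]
          exact mul_mem (Subgroup.mem_sup_left (Subgroup.subset_closure (by simp)))
            (Subgroup.mem_sup_right (Subgroup.subset_closure rfl))
      by_cases hA : (α * β').SameCycle x y
      · -- Case A : merged in α * β'
        have hδ : norb (Subgroup.closure {α * β}) ≤ norb (Subgroup.closure {α * β'}) + 1 := by
          calc norb (Subgroup.closure {α * β})
              ≤ norb (Subgroup.closure {α * β} ⊔ Subgroup.closure {τ}) + 1 :=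
                norb_le_sup_swap_succ _ x y
            _ ≤ norb (Subgroup.closure {α * β'}) + 1 :=
                Nat.add_le_add_right (norb_antitone hmemαβ') 1
        have hrel2 : oRel (Subgroup.closure {α, β'}) x y := by
          refine oRel_mono ?_ ((oRel_closure_singleton_iff (α * β') x y).mpr hA)
          rw [Subgroup.closure_le]
          rintro g rfl
          exact mul_mem (Subgroup.subset_closure (by simp)) (Subgroup.subset_closure (by simp))
        have hr' : norb (Subgroup.closure {α, β'}) ≤ norb (Subgroup.closure {α, β}) := by
          calc norb (Subgroup.closure {α, β'})
              ≤ norb (Subgroup.closure {α, β'} ⊔ Subgroup.closure {τ}) :=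
                norb_le_sup_swap _ hrel2
            _ ≤ norb (Subgroup.closure {α, β}) := norb_antitone hmem2β
        omega
      · -- Case B : x, y in different cycles of α * β', hence same cycle of α * β
        have hB : (α * β).SameCycle x y := by
          rw [← hprod2]
          exact sameCycle_mul_swap hA
        have hrelαβ : oRel (Subgroup.closure {α * β}) x y :=
          (oRel_closure_singleton_iff _ x y).mpr hB
        have hnrelαβ' : ¬ oRel (Subgroup.closure {α * β'}) x y := by
          rw [oRel_closure_singleton_iff]
          exact hA
        have hstαβ : ∀ a b, oRel (Subgroup.closure {α * β'}) a b →
            oRel (Subgroup.closure {α * β}) a b := fun a b hr =>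
          oRel_reduce hrelαβ (oRel_mono hmemαβ' hr)
        have hδ : norb (Subgroup.closure {α * β}) + 1 ≤ norb (Subgroup.closure {α * β'}) :=
          card_quot_succ_le_of_strict (s := orbSetoid (Subgroup.closure {α * β'}))
            (t := orbSetoid (Subgroup.closure {α * β})) hstαβ hrelαβ hnrelαβ'
        have hr' : norb (Subgroup.closure {α, β'}) ≤ norb (Subgroup.closure {α, β}) + 1 := by
          calc norb (Subgroup.closure {α, β'})
              ≤ norb (Subgroup.closure {α, β'} ⊔ Subgroup.closure {τ}) + 1 :=
                norb_le_sup_swap_succ _ x y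
            _ ≤ norb (Subgroup.closure {α, β}) + 1 :=
              Nat.add_le_add_right (norb_antitone hmem2β) 1
        omega

end CCAux

/-- If ⟨α, β⟩ acts transitively on a set of cardinality m, then
|α| + |β| + |(αβ)⁻¹| ≤ m + 2. -/
theorem cycleCount_sum_le {X : Type*} [Fintype X] [DecidableEq X]
    (m : ℕ) (hm : Fintype.card X = m) (α β : Equiv.Perm X)
    (htrans : ∀ x y : X, ∃ g ∈ Subgroup.closure {α, β}, g x = y) :
    cycleCount α + cycleCount β + cycleCount ((α * β)⁻¹) ≤ m + 2 := by
  subst hm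
  have hinv : cycleCount ((α * β)⁻¹) = cycleCount (α * β) := by
    unfold cycleCount
    rw [Equiv.Perm.cycleType_inv]
  have hkey := CCAux.key (Fintype.card X) α β (by omega)
  have hr : CCAux.norb (Subgroup.closure {α, β}) ≤ 1 := by
    have hsub : Subsingleton (Quotient (CCAux.orbSetoid (Subgroup.closure {α, β}))) := by
      constructor
      intro q1 q2
      induction q1 using Quotient.inductionOn with
      | h a =>
      induction q2 using Quotient.inductionOn with
      | h b =>
      exact Quotient.sound (htrans a b)
    rcases isEmpty_or_nonempty (Quotient (CCAux.orbSetoid (Subgroup.closure {α, β}))) with he | hne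
    · rw [CCAux.norb, Nat.card_of_isEmpty]
      omega
    · rw [CCAux.norb]
      haveI : Unique (Quotient (CCAux.orbSetoid (Subgroup.closure {α, β}))) :=
        @Unique.mk' _ ⟨Classical.arbitrary _⟩ hsub
      rw [Nat.card_unique]
  rw [hinv, CCAux.cycleCount_eq_norb, CCAux.cycleCount_eq_norb, CCAux.cycleCount_eq_norb]
  omega
end

section
/- If α and β are permutations of a finite set X with |X| = m such that ⟨α, β⟩ is transitive, and sign(α)·sign(β)·sign((αβ)⁻¹) = 1 (which always holds), then m + 2 − (|α| + |β| + |(αβ)⁻¹|) is a nonnegative even integer. -/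
namespace TwiceGenus

set_option linter.unusedSectionVars false
set_option linter.unusedVariables false

open Equiv Equiv.Perm Subgroup

variable {X : Type*} [Fintype X] [DecidableEq X]

lemma cycleCount_le (σ : Equiv.Perm X) : cycleCount σ ≤ Fintype.card X := by
  have h1 : Multiset.card σ.cycleType ≤ σ.cycleType.sum := by
    simpa using Multiset.card_nsmul_le_sum (fun x hx => one_le_two.trans
      (Equiv.Perm.two_le_of_mem_cycleType hx))
  have h2 : σ.cycleType.sum ≤ Fintype.card X := by
    rw [Equiv.Perm.sum_cycleType]
    exact Finset.card_le_univ _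
  unfold cycleCount
  omega

lemma cycleCount_one' : cycleCount (1 : Equiv.Perm X) = Fintype.card X := by
  simp [cycleCount, Equiv.Perm.cycleType_one]

lemma card_le_sum (σ : Equiv.Perm X) : Multiset.card σ.cycleType ≤ σ.cycleType.sum := by
  simpa using Multiset.card_nsmul_le_sum (fun x hx => one_le_two.trans
    (Equiv.Perm.two_le_of_mem_cycleType hx))

lemma sum_le_card (σ : Equiv.Perm X) : σ.cycleType.sum ≤ Fintype.card X := by
  rw [Equiv.Perm.sum_cycleType]; exact Finset.card_le_univ _

lemma cycleCount_swap_mul_self (σ : Equiv.Perm X) {b : X} (hb : σ b ≠ b) :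
    cycleCount (Equiv.swap b (σ b) * σ) = cycleCount σ + 1 := by
  set c := σ.cycleOf b with hc_def
  have hcyc : c.IsCycle := σ.isCycle_cycleOf hb
  have hmem : c ∈ σ.cycleFactorsFinset :=
    (Equiv.Perm.cycleOf_mem_cycleFactorsFinset_iff).2 (Equiv.Perm.mem_support.2 hb)
  have hdisj : Equiv.Perm.Disjoint (σ * c⁻¹) c :=
    Equiv.Perm.disjoint_mul_inv_of_mem_cycleFactorsFinset hmem
  set ρ := σ * c⁻¹ with hρ_def
  have hσ : σ = ρ * c := by rw [hρ_def]; group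
  have hcb : c b = σ b := Equiv.Perm.cycleOf_apply_self σ b
  have hcbb : c b ≠ b := by rw [hcb]; exact hb
  have hbsupp : b ∈ c.support := by
    rw [Equiv.Perm.mem_support_cycleOf_iff]
    exact ⟨Equiv.Perm.SameCycle.refl σ b, Equiv.Perm.mem_support.2 hb⟩
  have hcomm : ρ * c = c * ρ := (hdisj.commute).eq
  have hct : σ.cycleType = ρ.cycleType + c.cycleType := by
    rw [hσ, Equiv.Perm.Disjoint.cycleType_mul hdisj]
  have hswap : (Equiv.swap b (σ b) * σ) = (Equiv.swap b (c b) * c) * ρ := by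
    rw [hcb, hσ, hcomm, mul_assoc]
  have hsub : (Equiv.swap b (c b) * c).support ⊆ c.support := by
    intro z hz
    have := Equiv.Perm.support_mul_le (Equiv.swap b (c b)) c hz
    rcases Finset.mem_union.1 this with h | h
    · have : z ∈ ({b, c b} : Finset X) := by
        rwa [Equiv.Perm.support_swap (Ne.symm hcbb)] at h
      rcases Finset.mem_insert.1 this with rfl | h'
      · exact hbsupp
      · simp only [Finset.mem_singleton] at h'
        subst h'
        exact Equiv.Perm.apply_mem_support.2 hbsupp
    · exact h
  have hdisj2 : Equiv.Perm.Disjoint (Equiv.swap b (c b) * c) ρ := by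
    rw [Equiv.Perm.disjoint_iff_disjoint_support]
    exact Finset.disjoint_of_subset_left hsub
      ((Equiv.Perm.disjoint_iff_disjoint_support.1 hdisj.symm))
  have hct2 : (Equiv.swap b (σ b) * σ).cycleType
      = (Equiv.swap b (c b) * c).cycleType + ρ.cycleType := by
    rw [hswap, Equiv.Perm.Disjoint.cycleType_mul hdisj2]
  -- bounds
  have hsum := sum_le_card σ
  have hcard := card_le_sum σ
  have h2 : 2 ≤ c.support.card := hcyc.two_le_card_support
  have hcycT : c.cycleType = {c.support.card} := by
    rw [hcyc.cycleType]
  by_cases h2b : c (c b) = b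
  · -- c is a transposition; swap kills it
    have hceq : c = Equiv.swap b (c b) := hcyc.eq_swap_of_apply_apply_eq_self hcbb h2b
    have hcc : c * c = 1 := by rw [hceq]; exact Equiv.swap_mul_self _ _
    have h1 : Equiv.swap b (c b) * c = 1 := by rw [← hceq]; exact hcc
    have hsupc : c.support.card = 2 := by
      rw [hceq]; exact Equiv.Perm.card_support_swap (Ne.symm hcbb)
    unfold cycleCount
    rw [hct2, h1, Equiv.Perm.cycleType_one, hct, hcycT, hsupc]
    simp only [Multiset.sum_add, Multiset.card_add, Multiset.sum_zero, Multiset.card_zero,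
      Multiset.sum_singleton, Multiset.card_singleton, zero_add]
    have : ρ.cycleType.sum + 2 ≤ Fintype.card X := by
      rw [hct, hcycT, hsupc] at hsum; simpa [Multiset.sum_add] using hsum
    omega
  · -- swap b (c b) * c is a cycle with support one smaller
    have hcyc2 : (Equiv.swap b (c b) * c).IsCycle := hcyc.swap_mul hcbb h2b
    have hsupp2 : (Equiv.swap b (c b) * c).support = c.support \ {b} :=
      Equiv.Perm.support_swap_mul_eq c b h2b
    have hsc : (Equiv.swap b (c b) * c).support.card = c.support.card - 1 := by
      rw [hsupp2, Finset.sdiff_singleton_eq_erase, Finset.card_erase_of_mem hbsupp]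
    have hcycT2 : (Equiv.swap b (c b) * c).cycleType = {c.support.card - 1} := by
      rw [hcyc2.cycleType, hsc]
    unfold cycleCount
    rw [hct2, hcycT2, hct, hcycT]
    simp only [Multiset.sum_add, Multiset.card_add, Multiset.sum_singleton,
      Multiset.card_singleton]
    have : ρ.cycleType.sum + c.support.card ≤ Fintype.card X := by
      rw [hct, hcycT] at hsum; simpa [Multiset.sum_add] using hsum
    omega


/-- Multiplying by a swap one of whose points is fixed by `σ` merges, decreasing
the cycle count by one. -/
lemma cycleCount_swap_mul_fixed {σ : Equiv.Perm X} {x y : X} (hy : σ y = y) (hxy : x ≠ y) :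
    cycleCount σ = cycleCount (Equiv.swap x y * σ) + 1 := by
  set η := Equiv.swap x y * σ with hη
  have h1 : η y = x := by
    rw [hη, Equiv.Perm.mul_apply, hy, Equiv.swap_apply_right]
  have h2 : η y ≠ y := by rw [h1]; exact hxy
  have key := cycleCount_swap_mul_self η h2
  have h3 : Equiv.swap y (η y) * η = σ := by
    rw [h1, Equiv.swap_comm, hη, ← mul_assoc, Equiv.swap_mul_self, one_mul]
  rw [h3] at key
  exact key

/-- Multiplying by a swap decreases the cycle count by at most one. -/
lemma le_cycleCount_swap_mul_add_one :
    ∀ n (σ : Equiv.Perm X) {x y : X}, σ.support.card ≤ n → x ≠ y →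
    cycleCount σ ≤ cycleCount (Equiv.swap x y * σ) + 1 := by
  intro n
  induction n with
  | zero =>
    intro σ x y hs hxy
    have hσ1 : σ = 1 := by
      rw [← Equiv.Perm.support_eq_empty_iff]
      exact Finset.card_eq_zero.1 (Nat.le_zero.1 hs)
    exact (cycleCount_swap_mul_fixed (by rw [hσ1]; rfl) hxy).le
  | succ n ih =>
    intro σ x y hs hxy
    by_cases hy : σ y = y
    · exact (cycleCount_swap_mul_fixed hy hxy).le
    by_cases hx : σ x = x
    · rw [Equiv.swap_comm]
      exact (cycleCount_swap_mul_fixed hx hxy.symm).le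
    by_cases hax : σ y = x
    · have hxy' : Equiv.swap x y = Equiv.swap y (σ y) := by rw [hax, Equiv.swap_comm]
      rw [hxy', cycleCount_swap_mul_self σ hy]
      omega
    · have hay : σ y ≠ y := hy
      have hxa : x ≠ σ y := fun h => hax h.symm
      set σ₁ := Equiv.swap y (σ y) * σ with hσ₁
      have hC : cycleCount σ₁ = cycleCount σ + 1 := cycleCount_swap_mul_self σ hy
      have hcard : σ₁.support.card < σ.support.card := Equiv.Perm.card_support_swap_mul hy
      have hσ₁y : σ₁ y = y := by
        rw [hσ₁, Equiv.Perm.mul_apply, Equiv.swap_apply_right]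
      have hIH : cycleCount σ₁ ≤ cycleCount (Equiv.swap x (σ y) * σ₁) + 1 :=
        ih σ₁ (by omega) hxa
      have hξy : (Equiv.swap x (σ y) * σ₁) y = y := by
        rw [Equiv.Perm.mul_apply, hσ₁y, Equiv.swap_apply_of_ne_of_ne hxy.symm (Ne.symm hay)]
      have hfix : cycleCount (Equiv.swap x (σ y) * σ₁)
          = cycleCount (Equiv.swap (σ y) y * (Equiv.swap x (σ y) * σ₁)) + 1 :=
        cycleCount_swap_mul_fixed hξy hay
      have hkey : Equiv.swap (σ y) y * (Equiv.swap x (σ y) * σ₁) = Equiv.swap x y * σ := by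
        rw [hσ₁, ← mul_assoc, ← mul_assoc, mul_assoc (Equiv.swap (σ y) y)]
        congr 1
        rw [show Equiv.swap y (σ y) = Equiv.swap (σ y) y from Equiv.swap_comm _ _,
          ← mul_assoc, Equiv.swap_mul_swap_mul_swap hxa hxy, Equiv.swap_comm]
      rw [hkey] at hfix
      omega


lemma pow_swap_mul_eq (σ : Equiv.Perm X) {y a x : X}
    (havoid : ∀ k : ℕ, 0 < k → (σ ^ k) x ≠ y ∧ (σ ^ k) x ≠ a) (hx0 : x ≠ y ∧ x ≠ a) :
    ∀ k : ℕ, ((Equiv.swap y a * σ) ^ k) x = (σ ^ k) x := by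
  intro k
  induction k with
  | zero => rfl
  | succ k ihk =>
    have h1 : (σ ^ (k + 1)) x ≠ y ∧ (σ ^ (k + 1)) x ≠ a := havoid (k + 1) k.succ_pos
    rw [pow_succ', Equiv.Perm.mul_apply, ihk, Equiv.Perm.mul_apply,
      ← Equiv.Perm.mul_apply σ, ← pow_succ']
    exact Equiv.swap_apply_of_ne_of_ne h1.1 h1.2
  
lemma not_sameCycle_swap_mul {σ : Equiv.Perm X} {x y a : X}
    (h1 : ¬ σ.SameCycle x y) (h2 : ¬ σ.SameCycle x a) (hx0 : x ≠ y ∧ x ≠ a) :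
    ¬ (Equiv.swap y a * σ).SameCycle x a := by
  intro h
  obtain ⟨i, hi0, _, hi⟩ := h.exists_pow_eq _
  have havoid : ∀ k : ℕ, 0 < k → (σ ^ k) x ≠ y ∧ (σ ^ k) x ≠ a := by
    intro k hk
    constructor
    · intro h'
      exact h1 ⟨(k : ℤ), by rw [zpow_natCast]; exact h'⟩
    · intro h'
      exact h2 ⟨(k : ℤ), by rw [zpow_natCast]; exact h'⟩
  rw [pow_swap_mul_eq σ havoid hx0 i] at hi
  exact h2 ⟨(i : ℤ), by rw [zpow_natCast]; exact hi⟩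

lemma cycleCount_swap_mul_of_not_sameCycle :
    ∀ n (σ : Equiv.Perm X) {x y : X}, σ.support.card ≤ n → x ≠ y → ¬ σ.SameCycle x y →
    cycleCount (Equiv.swap x y * σ) + 1 ≤ cycleCount σ := by
  intro n
  induction n with
  | zero =>
    intro σ x y hs hxy _
    have hσ1 : σ = 1 := by
      rw [← Equiv.Perm.support_eq_empty_iff]
      exact Finset.card_eq_zero.1 (Nat.le_zero.1 hs)
    exact (cycleCount_swap_mul_fixed (by rw [hσ1]; rfl) hxy).ge
  | succ n ih =>
    intro σ x y hs hxy hsc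
    by_cases hy : σ y = y
    · exact (cycleCount_swap_mul_fixed hy hxy).ge
    by_cases hx : σ x = x
    · rw [Equiv.swap_comm]
      exact (cycleCount_swap_mul_fixed hx hxy.symm).ge
    by_cases hax : σ y = x
    · exact absurd ((Equiv.Perm.SameCycle.symm ⟨(1 : ℤ), by simpa using hax⟩)) hsc
    · have hay : σ y ≠ y := hy
      have hxa : x ≠ σ y := fun h => hax h.symm
      set σ₁ := Equiv.swap y (σ y) * σ with hσ₁
      have hC : cycleCount σ₁ = cycleCount σ + 1 := cycleCount_swap_mul_self σ hy
      have hcard : σ₁.support.card < σ.support.card := Equiv.Perm.card_support_swap_mul hy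
      have hσ₁y : σ₁ y = y := by
        rw [hσ₁, Equiv.Perm.mul_apply, Equiv.swap_apply_right]
      have hnsc2 : ¬ σ.SameCycle x (σ y) := by
        intro h
        exact hsc (h.trans ⟨(-1 : ℤ), by simp⟩)
      have hns1 : ¬ σ₁.SameCycle x (σ y) :=
        not_sameCycle_swap_mul hsc hnsc2 ⟨hxy, hxa⟩
      have hIH : cycleCount (Equiv.swap x (σ y) * σ₁) + 1 ≤ cycleCount σ₁ :=
        ih σ₁ (by omega) hxa hns1
      have hξy : (Equiv.swap x (σ y) * σ₁) y = y := by
        rw [Equiv.Perm.mul_apply, hσ₁y, Equiv.swap_apply_of_ne_of_ne hxy.symm (Ne.symm hay)]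
      have hfix : cycleCount (Equiv.swap x (σ y) * σ₁)
          = cycleCount (Equiv.swap (σ y) y * (Equiv.swap x (σ y) * σ₁)) + 1 :=
        cycleCount_swap_mul_fixed hξy hay
      have hkey : Equiv.swap (σ y) y * (Equiv.swap x (σ y) * σ₁) = Equiv.swap x y * σ := by
        rw [hσ₁, ← mul_assoc, ← mul_assoc, mul_assoc (Equiv.swap (σ y) y)]
        congr 1
        rw [show Equiv.swap y (σ y) = Equiv.swap (σ y) y from Equiv.swap_comm _ _,
          ← mul_assoc, Equiv.swap_mul_swap_mul_swap hxa hxy, Equiv.swap_comm]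
      rw [hkey] at hfix
      omega


def orbSetoid (G : Subgroup (Equiv.Perm X)) : Setoid X where
  r x y := ∃ g ∈ G, g x = y
  iseqv := ⟨fun x => ⟨1, G.one_mem, rfl⟩,
    fun {x y} ⟨g, hg, h⟩ => ⟨g⁻¹, G.inv_mem hg, by rw [← h]; simp⟩,
    fun {x y z} ⟨g, hg, h⟩ ⟨g', hg', h'⟩ =>
      ⟨g' * g, G.mul_mem hg' hg, by rw [Equiv.Perm.mul_apply, h, h']⟩⟩

lemma orbSetoid_r {G : Subgroup (Equiv.Perm X)} {x y : X} :
    (orbSetoid G).r x y ↔ ∃ g ∈ G, g x = y := Iff.rfl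

lemma rel_closure_singleton_iff (σ : Equiv.Perm X) (x y : X) :
    (orbSetoid (Subgroup.closure {σ})).r x y ↔ σ.SameCycle x y := by
  rw [orbSetoid_r]
  constructor
  · rintro ⟨g, hg, rfl⟩
    rw [← Subgroup.zpowers_eq_closure, Subgroup.mem_zpowers_iff] at hg
    obtain ⟨k, rfl⟩ := hg
    exact ⟨k, rfl⟩
  · rintro ⟨k, rfl⟩
    exact ⟨σ ^ k,
      Subgroup.zpow_mem (Subgroup.closure {σ}) (Subgroup.subset_closure (Set.mem_singleton σ)) k,
      rfl⟩

noncomputable def orbCount (G : Subgroup (Equiv.Perm X)) : ℕ :=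
  Nat.card (Quotient (orbSetoid G))

lemma orbCount_closure_singleton (σ : Equiv.Perm X) :
    orbCount (Subgroup.closure {σ}) = cycleCount σ := by
  classical
  have hfix : ∀ {x y : X}, σ.SameCycle x y → σ x = x → y = x := by
    rintro x y ⟨k, rfl⟩ h
    exact Equiv.Perm.zpow_apply_eq_self_of_apply_eq_self h k
  let f : X → ({x : X // σ x = x} ⊕ {c : Equiv.Perm X // c ∈ σ.cycleFactorsFinset}) :=
    fun x =>
      if h : σ x = x then Sum.inl ⟨x, h⟩
      else Sum.inr ⟨σ.cycleOf x,
        Equiv.Perm.cycleOf_mem_cycleFactorsFinset_iff.2 (Equiv.Perm.mem_support.2 h)⟩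
  have hwd : ∀ x y : X, (orbSetoid (Subgroup.closure {σ})).r x y → f x = f y := by
    intro x y hr
    have hsc : σ.SameCycle x y := (rel_closure_singleton_iff σ x y).1 hr
    by_cases hx : σ x = x
    · have : y = x := hfix hsc hx
      subst this; rfl
    · by_cases hy : σ y = y
      · exact absurd (hfix hsc.symm hy ▸ hy) hx
      · simp only [f, dif_neg hx, dif_neg hy]
        congr 1
        exact Subtype.ext hsc.cycleOf_eq
  let F : Quotient (orbSetoid (Subgroup.closure {σ})) → _ := Quotient.lift f hwd
  have hFbij : Function.Bijective F := by
    constructor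
    · intro q1 q2 h
      induction q1 using Quotient.ind with | _ x => ?_
      induction q2 using Quotient.ind with | _ y => ?_
      apply Quotient.sound
      show (orbSetoid _).r x y
      rw [rel_closure_singleton_iff]
      simp only [F, Quotient.lift_mk, f] at h
      by_cases hx : σ x = x <;> by_cases hy : σ y = y
      · rw [dif_pos hx, dif_pos hy, Sum.inl.injEq, Subtype.mk.injEq] at h
        rw [h]
      · rw [dif_pos hx, dif_neg hy] at h
        exact absurd h (by simp)
      · rw [dif_neg hx, dif_pos hy] at h
        exact absurd h (by simp)
      · rw [dif_neg hx, dif_neg hy, Sum.inr.injEq, Subtype.mk.injEq] at h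
        have hymem : y ∈ (σ.cycleOf y).support := by
          rw [Equiv.Perm.mem_support_cycleOf_iff]
          exact ⟨Equiv.Perm.SameCycle.refl σ y, Equiv.Perm.mem_support.2 hy⟩
        rw [← h, Equiv.Perm.mem_support_cycleOf_iff] at hymem
        exact hymem.1
    · rintro (⟨x, hx⟩ | ⟨c, hc⟩)
      · exact ⟨Quotient.mk _ x, by simp [F, f, dif_pos hx]⟩
      · have hc1 : c.IsCycle := (Equiv.Perm.mem_cycleFactorsFinset_iff.1 hc).1
        have hne : c.support.Nonempty := Finset.card_pos.1 (by
          have := hc1.two_le_card_support; omega)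
        obtain ⟨w, hw⟩ := hne
        have hws : σ w ≠ w := Equiv.Perm.mem_support.1
          (Equiv.Perm.mem_cycleFactorsFinset_support_le hc hw)
        refine ⟨Quotient.mk _ w, ?_⟩
        simp only [F, Quotient.lift_mk, f, dif_neg hws]
        congr 1
        exact Subtype.ext (Equiv.Perm.cycle_is_cycleOf hw hc).symm
  have hcard := Nat.card_eq_of_bijective F hFbij
  rw [orbCount, hcard, Nat.card_sum]
  have h1 : Nat.card {x : X // σ x = x} = Fintype.card X - σ.support.card := by
    rw [Nat.card_eq_fintype_card, Fintype.card_subtype]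
    have : Finset.univ.filter (fun x => σ x = x) = (σ.support)ᶜ := by
      ext z
      simp [Equiv.Perm.mem_support]
    rw [this, Finset.card_compl]
  have h2 : Nat.card {c : Equiv.Perm X // c ∈ σ.cycleFactorsFinset}
      = σ.cycleFactorsFinset.card := by
    rw [Nat.card_eq_fintype_card]
    exact Fintype.card_coe _
  rw [h1, h2, cycleCount, Equiv.Perm.sum_cycleType]
  congr 1
  rw [Equiv.Perm.cycleType_def, Multiset.card_map]
  rfl

lemma rel_closure_of_gens {S : Set (Equiv.Perm X)} (t : Setoid X)
    (hgen : ∀ f ∈ S, ∀ x : X, t.r x (f x)) :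
    ∀ g ∈ Subgroup.closure S, ∀ x : X, t.r x (g x) := by
  intro g hg
  induction hg using Subgroup.closure_induction with
  | mem f hf => exact hgen f hf
  | one => intro x; simpa using t.refl x
  | mul g h _ _ ihg ihh =>
      intro x
      exact t.trans (ihh x) (ihg (h x))
  | inv g _ ihg =>
      intro x
      have := ihg (g⁻¹ x)
      rw [show g (g⁻¹ x) = x from by simp] at this
      exact t.symm this

lemma orbCount_le_of_rel_imp {G H : Subgroup (Equiv.Perm X)}
    (h : ∀ x y : X, (orbSetoid G).r x y → (orbSetoid H).r x y) :
    orbCount H ≤ orbCount G := by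
  have hsurj : Function.Surjective
      (Quotient.map' (id : X → X) (fun x y hr => h x y hr) :
        Quotient (orbSetoid G) → Quotient (orbSetoid H)) := by
    intro q
    induction q using Quotient.ind with | _ y => exact ⟨Quotient.mk _ y, rfl⟩
  exact Nat.card_le_card_of_surjective _ hsurj

lemma orbCount_lt_of_rel_imp {G H : Subgroup (Equiv.Perm X)} {a b : X}
    (h : ∀ x y : X, (orbSetoid G).r x y → (orbSetoid H).r x y)
    (hab : (orbSetoid H).r a b) (hnab : ¬ (orbSetoid G).r a b) :
    orbCount H < orbCount G := by
  classical
  let F : Quotient (orbSetoid G) → Quotient (orbSetoid H) :=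
    Quotient.map' (id : X → X) (fun x y hr => h x y hr)
  have hsurj : Function.Surjective F := by
    intro q
    induction q using Quotient.ind with | _ y => exact ⟨Quotient.mk _ y, rfl⟩
  have hninj : ¬ Function.Injective F := by
    intro hinj
    have hFa : F (Quotient.mk _ a) = F (Quotient.mk _ b) := Quotient.sound' hab
    exact hnab (Quotient.exact' (hinj hFa))
  letI : Fintype (Quotient (orbSetoid G)) := Fintype.ofFinite _
  letI : Fintype (Quotient (orbSetoid H)) := Fintype.ofFinite _
  rw [orbCount, orbCount, Nat.card_eq_fintype_card, Nat.card_eq_fintype_card]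
  exact Fintype.card_lt_of_surjective_not_injective F hsurj hninj


/-- Adjoining one "merge" of the classes of `a` and `b` increases the number of
classes by at most one. -/
lemma orbCount_le_add_one {G' G : Subgroup (Equiv.Perm X)} {a b : X}
    (h0 : ∀ x y : X, (orbSetoid G').r x y → (orbSetoid G).r x y)
    (h : ∀ x y : X, (orbSetoid G).r x y → (orbSetoid G').r x y ∨
      ((orbSetoid G').r x a ∧ (orbSetoid G').r b y) ∨
      ((orbSetoid G').r x b ∧ (orbSetoid G').r a y)) :
    orbCount G' ≤ orbCount G + 1 := by
  classical
  let t := orbSetoid G'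
  let f : X → (Quotient (orbSetoid G) ⊕ Unit) :=
    fun x => if t.r x b then Sum.inr () else Sum.inl (Quotient.mk _ x)
  have hwd : ∀ x y : X, (orbSetoid G').r x y → f x = f y := by
    intro x y hr
    by_cases hxb : t.r x b
    · have hyb : t.r y b := t.trans (t.symm hr) hxb
      simp only [f, if_pos hxb, if_pos hyb]
    · have hyb : ¬ t.r y b := fun hyb => hxb (t.trans hr hyb)
      simp only [f, if_neg hxb, if_neg hyb]
      exact congrArg Sum.inl (Quotient.sound (h0 x y hr))
  let F : Quotient (orbSetoid G') → (Quotient (orbSetoid G) ⊕ Unit) :=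
    Quotient.lift f hwd
  have hFinj : Function.Injective F := by
    intro q1 q2 hq
    induction q1 using Quotient.ind with | _ x => ?_
    induction q2 using Quotient.ind with | _ y => ?_
    simp only [F, Quotient.lift_mk, f] at hq
    apply Quotient.sound
    show t.r x y
    by_cases hxb : t.r x b <;> by_cases hyb : t.r y b
    · exact t.trans hxb (t.symm hyb)
    · rw [if_pos hxb, if_neg hyb] at hq
      exact absurd hq (by simp)
    · rw [if_neg hxb, if_pos hyb] at hq
      exact absurd hq (by simp)
    · rw [if_neg hxb, if_neg hyb, Sum.inl.injEq] at hq
      have hrel : (orbSetoid G).r x y := Quotient.exact hq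
      rcases h x y hrel with hr | ⟨_, hby⟩ | ⟨hxb', _⟩
      · exact hr
      · exact absurd (t.trans (t.symm hby) (t.refl b)) hyb
      · exact absurd hxb' hxb
  have hcard : Nat.card (Quotient (orbSetoid G'))
      ≤ Nat.card (Quotient (orbSetoid G) ⊕ Unit) :=
    Nat.card_le_card_of_injective F hFinj
  rw [Nat.card_sum] at hcard
  simpa [orbCount] using hcard

lemma master_base (α : Equiv.Perm X) :
    cycleCount α + cycleCount (1 : Equiv.Perm X) + cycleCount (α * 1)
      ≤ Fintype.card X + 2 * orbCount (Subgroup.closure {α, 1}) := by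
  have hcl : Subgroup.closure ({α, 1} : Set (Equiv.Perm X)) = Subgroup.closure {α} := by
    apply le_antisymm
    · rw [Subgroup.closure_le]
      rintro g (rfl | rfl)
      · exact Subgroup.subset_closure rfl
      · exact Subgroup.one_mem _
    · exact Subgroup.closure_mono (Set.singleton_subset_iff.2 (Set.mem_insert _ _))
  rw [mul_one, cycleCount_one', hcl, orbCount_closure_singleton]
  omega

lemma master : ∀ (n : ℕ) (β α : Equiv.Perm X), Fintype.card X - cycleCount β ≤ n →
    cycleCount α + cycleCount β + cycleCount (α * β)
      ≤ Fintype.card X + 2 * orbCount (Subgroup.closure {α, β}) := by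
  intro n
  induction n with
  | zero =>
    intro β α hn
    have hβm : cycleCount β = Fintype.card X := le_antisymm (cycleCount_le β) (by omega)
    have h1 := card_le_sum β
    have h2 := sum_le_card β
    have h2s : Multiset.card β.cycleType * 2 ≤ β.cycleType.sum := by
      simpa [mul_comm] using Multiset.card_nsmul_le_sum
        (fun x hx => Equiv.Perm.two_le_of_mem_cycleType hx)
    have hcard0 : Multiset.card β.cycleType = 0 := by
      unfold cycleCount at hβm; omega
    have hβ1 : β = 1 := Equiv.Perm.card_cycleType_eq_zero.1 hcard0
    subst hβ1
    exact master_base α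
  | succ n ih =>
    intro β α hn
    by_cases hβ1 : β = 1
    · subst hβ1; exact master_base α
    · obtain ⟨b, hb⟩ : ∃ b, β b ≠ b := by
        by_contra hc
        push_neg at hc
        exact hβ1 (Equiv.ext fun z => hc z)
      obtain ⟨a, ha⟩ : ∃ a, β b = a := ⟨_, rfl⟩
      have hab : a ≠ b := ha ▸ hb
      obtain ⟨β', hβ'def⟩ : ∃ β', β' = Equiv.swap b a * β := ⟨_, rfl⟩
      have hC : cycleCount β' = cycleCount β + 1 := by
        rw [hβ'def, ← ha]
        exact cycleCount_swap_mul_self β hb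
      have hle' := cycleCount_le β'
      have hIH := ih β' α (by omega)
      have hβback : β = Equiv.swap b a * β' := by
        rw [hβ'def, ← mul_assoc, Equiv.swap_mul_self, one_mul]
      have hne : α a ≠ α b := fun h => hab (α.injective h)
      have hkey : Equiv.swap (α a) (α b) * (α * β') = α * β := by
        rw [hβ'def]
        calc Equiv.swap (α a) (α b) * (α * (Equiv.swap b a * β))
            = (Equiv.swap (α a) (α b) * α) * (Equiv.swap b a * β) := by
              rw [mul_assoc]
          _ = (α * Equiv.swap a b) * (Equiv.swap b a * β) := by
              rw [← Equiv.mul_swap_eq_swap_mul]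
          _ = α * ((Equiv.swap a b * Equiv.swap b a) * β) := by
              simp only [mul_assoc]
          _ = α * β := by
              rw [Equiv.swap_comm a b, Equiv.swap_mul_self, one_mul]
      have hkey2 : Equiv.swap (α a) (α b) * (α * β) = α * β' := by
        rw [← hkey, ← mul_assoc, Equiv.swap_mul_self, one_mul]
      set G := Subgroup.closure ({α, β} : Set (Equiv.Perm X)) with hG
      set G' := Subgroup.closure ({α, β'} : Set (Equiv.Perm X)) with hG'
      have hαG : α ∈ G := Subgroup.subset_closure (Set.mem_insert _ _)
      have hβG : β ∈ G := Subgroup.subset_closure (Set.mem_insert_of_mem _ rfl)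
      have hαG' : α ∈ G' := Subgroup.subset_closure (Set.mem_insert _ _)
      have hβ'G' : β' ∈ G' := Subgroup.subset_closure (Set.mem_insert_of_mem _ rfl)
      have hrba : (orbSetoid G).r b a := ⟨β, hβG, ha⟩
      have hrzβ' : ∀ z, (orbSetoid G').r z (β' z) := fun z => ⟨β', hβ'G', rfl⟩
      -- G'-rel always implies G-rel
      have hG'G : ∀ x y : X, (orbSetoid G').r x y → (orbSetoid G).r x y := by
        rintro x y ⟨g, hg, rfl⟩
        refine rel_closure_of_gens (orbSetoid G) ?_ g hg x
        rintro f (rfl | rfl) z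
        · exact ⟨f, hαG, rfl⟩
        · have h1 : (orbSetoid G).r z (β z) := ⟨β, hβG, rfl⟩
          refine (orbSetoid G).trans h1 ?_
          rw [hβ'def, Equiv.Perm.mul_apply]
          rcases eq_or_ne (β z) b with hzb | hzb
          · rw [hzb, Equiv.swap_apply_left]
            exact hrba
          rcases eq_or_ne (β z) a with hza | hza
          · rw [hza, Equiv.swap_apply_right]
            exact (orbSetoid G).symm hrba
          · rw [Equiv.swap_apply_of_ne_of_ne hzb hza]
      by_cases habrel : (orbSetoid G').r a b
      · -- `a` and `b` already in the same `G'`-orbit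
        have hGG' : ∀ x y : X, (orbSetoid G).r x y → (orbSetoid G').r x y := by
          rintro x y ⟨g, hg, rfl⟩
          refine rel_closure_of_gens (orbSetoid G') ?_ g hg x
          rintro f (rfl | rfl) z
          · exact ⟨f, hαG', rfl⟩
          · refine (orbSetoid G').trans (hrzβ' z) ?_
            rw [hβback, Equiv.Perm.mul_apply]
            rcases eq_or_ne (β' z) b with hzb | hzb
            · rw [hzb, Equiv.swap_apply_left]
              exact (orbSetoid G').symm habrel
            rcases eq_or_ne (β' z) a with hza | hza
            · rw [hza, Equiv.swap_apply_right]
              exact habrel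
            · rw [Equiv.swap_apply_of_ne_of_ne hzb hza]
        have ht : orbCount G' ≤ orbCount G := orbCount_le_of_rel_imp hGG'
        have hU : cycleCount (α * β) ≤ cycleCount (α * β') + 1 := by
          have := le_cycleCount_swap_mul_add_one ((α * β).support.card) (α * β)
            le_rfl hne
          rwa [hkey2] at this
        omega
      · -- `a` and `b` in different `G'`-orbits
        have hNSC : ¬ (α * β').SameCycle (α a) (α b) := by
          intro hsc
          obtain ⟨k, hk⟩ := hsc
          have hrel : (orbSetoid G').r (α a) (α b) :=
            ⟨(α * β') ^ k, Subgroup.zpow_mem _ (G'.mul_mem hαG' hβ'G') k, hk⟩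
          apply habrel
          have h1 : (orbSetoid G').r a (α a) := ⟨α, hαG', rfl⟩
          have h2 : (orbSetoid G').r (α b) b := (orbSetoid G').symm ⟨α, hαG', rfl⟩
          exact (orbSetoid G').trans ((orbSetoid G').trans h1 hrel) h2
        have hB : cycleCount (α * β) + 1 ≤ cycleCount (α * β') := by
          have := cycleCount_swap_mul_of_not_sameCycle ((α * β').support.card)
            (α * β') le_rfl hne hNSC
          rwa [hkey] at this
        -- the G-relation is generated by the G'-relation plus merging a and b
        have hGs : ∀ x y : X, (orbSetoid G).r x y → (orbSetoid G').r x y ∨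
            ((orbSetoid G').r x a ∧ (orbSetoid G').r b y) ∨
            ((orbSetoid G').r x b ∧ (orbSetoid G').r a y) := by
          set t := orbSetoid G' with ht'
          let s : Setoid X := {
            r := fun x y => t.r x y ∨ (t.r x a ∧ t.r b y) ∨ (t.r x b ∧ t.r a y)
            iseqv := by
              constructor
              · intro x; exact Or.inl (t.refl x)
              · intro x y hxy
                rcases hxy with h | ⟨h1, h2⟩ | ⟨h1, h2⟩
                · exact Or.inl (t.symm h)
                · exact Or.inr (Or.inr ⟨t.symm h2, t.symm h1⟩)
                · exact Or.inr (Or.inl ⟨t.symm h2, t.symm h1⟩)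
              · intro x y z hxy hyz
                rcases hxy with h | ⟨h1, h2⟩ | ⟨h1, h2⟩ <;>
                  rcases hyz with h' | ⟨h1', h2'⟩ | ⟨h1', h2'⟩
                · exact Or.inl (t.trans h h')
                · exact Or.inr (Or.inl ⟨t.trans h h1', h2'⟩)
                · exact Or.inr (Or.inr ⟨t.trans h h1', h2'⟩)
                · exact Or.inr (Or.inl ⟨h1, t.trans h2 h'⟩)
                · exact Or.inl (t.trans (t.trans h1 (t.symm (t.trans h2 h1'))) h2')
                · exact Or.inl (t.trans h1 h2')
                · exact Or.inr (Or.inr ⟨h1, t.trans h2 h'⟩)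
                · exact Or.inl (t.trans h1 h2')
                · exact Or.inl (t.trans (t.trans h1 (t.symm (t.trans h2 h1'))) h2')
          }
          rintro x y ⟨g, hg, rfl⟩
          refine rel_closure_of_gens s ?_ g hg x
          rintro f (rfl | rfl) z
          · exact Or.inl ⟨f, hαG', rfl⟩
          · have h1 : s.r z (β' z) := Or.inl (hrzβ' z)
            refine s.trans h1 ?_
            rw [hβback, Equiv.Perm.mul_apply]
            rcases eq_or_ne (β' z) b with hzb | hzb
            · rw [hzb, Equiv.swap_apply_left]
              exact Or.inr (Or.inr ⟨t.refl b, t.refl a⟩)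
            rcases eq_or_ne (β' z) a with hza | hza
            · rw [hza, Equiv.swap_apply_right]
              exact Or.inr (Or.inl ⟨t.refl a, t.refl b⟩)
            · rw [Equiv.swap_apply_of_ne_of_ne hzb hza]
              try exact Or.inl (t.refl _)
        have ht : orbCount G' ≤ orbCount G + 1 := orbCount_le_add_one hG'G hGs
        omega

end TwiceGenus

open TwiceGenus in
/-- If ⟨α, β⟩ is transitive on m points and sign(α)·sign(β)·sign((αβ)⁻¹) = 1
(which always holds), then m + 2 − (|α| + |β| + |(αβ)⁻¹|) is a nonnegative
even integer (twice the genus of the associated connected branched cover). -/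
theorem twice_genus_nonneg_even {X : Type*} [Fintype X] [DecidableEq X]
    (m : ℕ) (hm : Fintype.card X = m) (α β : Equiv.Perm X)
    (htrans : ∀ x y : X, ∃ g ∈ Subgroup.closure {α, β}, g x = y)
    (hsign : Equiv.Perm.sign α * Equiv.Perm.sign β
      * Equiv.Perm.sign ((α * β)⁻¹) = 1) :
    0 ≤ (m : ℤ) + 2 - (cycleCount α + cycleCount β + cycleCount ((α * β)⁻¹)) ∧
    Even ((m : ℤ) + 2
      - (cycleCount α + cycleCount β + cycleCount ((α * β)⁻¹))) := by
  classical
  subst hm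
  have hinv : cycleCount ((α * β)⁻¹) = cycleCount (α * β) := by
    unfold cycleCount
    rw [Equiv.Perm.cycleType_inv]
  -- the main inequality
  have hmain : cycleCount α + cycleCount β + cycleCount (α * β) ≤ Fintype.card X + 2 := by
    rcases isEmpty_or_nonempty X with hX | hX
    · have hz : ∀ σ : Equiv.Perm X, cycleCount σ = 0 := by
        intro σ
        have hσ : σ = 1 := Equiv.ext fun x => isEmptyElim x
        subst hσ
        simp [cycleCount, Equiv.Perm.cycleType_one]
    
      simp [hz]
    · have hsub : ∀ q1 q2 : Quotient (orbSetoid (Subgroup.closure ({α, β} : Set (Equiv.Perm X)))), q1 = q2 := by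
        intro q1 q2
        induction q1 using Quotient.ind with | _ x => ?_
        induction q2 using Quotient.ind with | _ y => ?_
        exact Quotient.sound (htrans x y)
      have ht1 : orbCount (Subgroup.closure ({α, β} : Set (Equiv.Perm X))) = 1 := by
        rw [orbCount, Nat.card_eq_one_iff_exists]
        obtain ⟨x⟩ := hX
        exact ⟨Quotient.mk _ x, fun q => hsub q _⟩
      have := master (Fintype.card X) β α (Nat.sub_le _ _)
      omega
  -- parity
  have hsign' : ((-1 : ℤˣ) ^ (α.cycleType.sum + Multiset.card α.cycleType
      + (β.cycleType.sum + Multiset.card β.cycleType)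
      + ((α * β).cycleType.sum + Multiset.card (α * β).cycleType))) = 1 := by
    rw [pow_add, pow_add, ← Equiv.Perm.sign_of_cycleType, ← Equiv.Perm.sign_of_cycleType]
    have : Equiv.Perm.sign ((α * β)⁻¹)
        = (-1 : ℤˣ) ^ ((α * β).cycleType.sum + Multiset.card (α * β).cycleType) := by
      rw [Equiv.Perm.sign_inv, Equiv.Perm.sign_of_cycleType]
    rw [← this]
    exact hsign
  have heven : Even (α.cycleType.sum + Multiset.card α.cycleType
      + (β.cycleType.sum + Multiset.card β.cycleType)
      + ((α * β).cycleType.sum + Multiset.card (α * β).cycleType)) := by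
    rw [← neg_one_pow_eq_one_iff_even (R := ℤˣ) (by decide)]
    exact hsign'
  obtain ⟨k, hk⟩ := heven
  -- numeric facts
  have b1 := card_le_sum α
  have b2 := sum_le_card α
  have b3 := card_le_sum β
  have b4 := sum_le_card β
  have b5 := card_le_sum (α * β)
  have b6 := sum_le_card (α * β)
  rw [hinv]
  unfold cycleCount
  constructor
  · have h := hmain
    unfold cycleCount at h
    push_cast
    omega
  · rw [Int.even_iff]
    push_cast
    omega
end
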